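/- Let U be a unitary on a finite-dimensional complex Hilbert space and let |ψ₀⟩, |ψ₁⟩ be orthonormal vectors with U|0̄⟩ = sin(θ)|ψ₀⟩ + cos(θ)|ψ₁⟩ for some real θ. Define the Grover operator G = -U(I - 2|0̄⟩⟨0̄|)U†(I - 2|ψ₀⟩⟨ψ₀|). Then for every natural number j ≥ 0, G^j U |0̄⟩ = sin((2j+1)θ)|ψ₀⟩ + cos((2j+1)θ)|ψ₁⟩. In particular, if sin(θ) = 1/2 then G·U|0̄⟩ = |ψ₀⟩. -/

import Mathlib

open scoped ComplexConjugate

/-- Exact amplitude amplification: let `U` be a unitary on a finite-dimensional complex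
Hilbert space, `z = |0̄⟩` a unit vector, and `ψ₀, ψ₁` orthonormal with
`U z = sin θ • ψ₀ + cos θ • ψ₁`.  With the Grover operator
`G = -U(I - 2|0̄⟩⟨0̄|)U†(I - 2|ψ₀⟩⟨ψ₀|)`, for every `j ≥ 0`,
`G^j (U z) = sin((2j+1)θ) • ψ₀ + cos((2j+1)θ) • ψ₁`; in particular if `sin θ = 1/2` then
`G (U z) = ψ₀`. -/
theorem stmt_19 {H : Type*} [NormedAddCommGroup H] [InnerProductSpace ℂ H]
    [FiniteDimensional ℂ H] (U : H ≃ₗᵢ[ℂ] H) (z ψ₀ ψ₁ : H) (θ : ℝ)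
    (hz : ‖z‖ = 1) (hψ₀ : ‖ψ₀‖ = 1) (hψ₁ : ‖ψ₁‖ = 1)
    (horth : (inner ℂ ψ₀ ψ₁ : ℂ) = 0)
    (hU : U z = (Real.sin θ : ℂ) • ψ₀ + (Real.cos θ : ℂ) • ψ₁)
    (G : H → H)
    (hG : ∀ v : H,
      G v = -(U ((U.symm (v - (2 : ℂ) • (inner ℂ ψ₀ v : ℂ) • ψ₀)) -
        (2 : ℂ) • (inner ℂ z (U.symm (v - (2 : ℂ) • (inner ℂ ψ₀ v : ℂ) • ψ₀)) : ℂ) • z))) :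
    (∀ j : ℕ, G^[j] (U z) =
        (Real.sin ((2 * j + 1) * θ) : ℂ) • ψ₀ + (Real.cos ((2 * j + 1) * θ) : ℂ) • ψ₁) ∧
    (Real.sin θ = 1 / 2 → G (U z) = ψ₀) := by
  have h00 : (inner ℂ ψ₀ ψ₀ : ℂ) = 1 := by
    rw [inner_self_eq_norm_sq_to_K, hψ₀]; norm_num
  have h11 : (inner ℂ ψ₁ ψ₁ : ℂ) = 1 := by
    rw [inner_self_eq_norm_sq_to_K, hψ₁]; norm_num
  have h10 : (inner ℂ ψ₁ ψ₀ : ℂ) = 0 := by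
    rw [← inner_conj_symm, horth]; simp
  have key : ∀ α : ℝ, G ((Real.sin α : ℂ) • ψ₀ + (Real.cos α : ℂ) • ψ₁)
      = (Real.sin (α + 2 * θ) : ℂ) • ψ₀ + (Real.cos (α + 2 * θ) : ℂ) • ψ₁ := by
    intro α
    rw [hG]
    have h1 : (inner ℂ ψ₀ ((Real.sin α : ℂ) • ψ₀ + (Real.cos α : ℂ) • ψ₁) : ℂ)
        = (Real.sin α : ℂ) := by
      simp [inner_add_right, inner_smul_right, h00, horth, hψ₀]
    rw [h1]
    have h2 : ((Real.sin α : ℂ) • ψ₀ + (Real.cos α : ℂ) • ψ₁)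
        - (2 : ℂ) • (Real.sin α : ℂ) • ψ₀
        = (-(Real.sin α : ℝ) : ℂ) • ψ₀ + (Real.cos α : ℂ) • ψ₁ := by
      push_cast
      module
    rw [h2]
    have h3 : (inner ℂ z (U.symm ((-(Real.sin α : ℝ) : ℂ) • ψ₀ + (Real.cos α : ℂ) • ψ₁)) : ℂ)
        = (Real.cos (α + θ) : ℂ) := by
      rw [← U.inner_map_map z, U.apply_symm_apply, hU]
      simp only [inner_add_left, inner_add_right, inner_smul_left, inner_smul_right,
        h00, h11, horth, h10, mul_zero, mul_one, add_zero, zero_add]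
      simp only [Complex.conj_ofReal]
      push_cast [Real.cos_add]
      ring
    rw [h3]
    rw [map_sub, map_smul, map_smul, U.apply_symm_apply, hU]
    have e0 : Real.sin (α + 2 * θ)
        = -(-(Real.sin α)) + 2 * Real.cos (α + θ) * Real.sin θ := by
      have h : α + 2 * θ = (α + θ) + θ := by ring
      rw [h, Real.sin_add, Real.cos_add, Real.sin_add]
      linear_combination Real.sin α * Real.sin_sq_add_cos_sq θ
    have e1 : Real.cos (α + 2 * θ)
        = -(Real.cos α) + 2 * Real.cos (α + θ) * Real.cos θ := by
      have h : α + 2 * θ = (α + θ) + θ := by ring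
      rw [h, Real.cos_add, Real.cos_add, Real.sin_add]
      linear_combination (-Real.cos α) * Real.sin_sq_add_cos_sq θ
    rw [e0, e1]
    push_cast
    module
  have main : ∀ j : ℕ, G^[j] (U z) =
      (Real.sin ((2 * j + 1) * θ) : ℂ) • ψ₀ + (Real.cos ((2 * j + 1) * θ) : ℂ) • ψ₁ := by
    intro j
    induction j with
    | zero => simpa using hU
    | succ n ih =>
      rw [Function.iterate_succ_apply', ih, key]
      have h : (2 * (n : ℝ) + 1) * θ + 2 * θ = (2 * ((n : ℝ) + 1) + 1) * θ := by ring
      push_cast [h]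
      rfl
  refine ⟨main, fun hs => ?_⟩
  have h1 := main 1
  simp only [Function.iterate_one] at h1
  have h3 : ((2 : ℝ) * (1 : ℕ) + 1) * θ = 3 * θ := by norm_num
  rw [h3] at h1
  have hsin3 : Real.sin (3 * θ) = 1 := by
    rw [Real.sin_three_mul, hs]; ring
  have hcos3 : Real.cos (3 * θ) = 0 := by
    have hpy := Real.sin_sq_add_cos_sq (3 * θ)
    nlinarith [hpy]
  rw [h1, hsin3, hcos3]
  simp
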